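/- Let G be a graph whose vertex set is covered by sets W_0,...,W_{m-1} (m ≥ 2) arranged cyclically so that W_i ∩ W_{i+1} = {a_i} (indices mod m), W_i ∩ W_j = ∅ for non-consecutive i, j, and each W_i has at least 3 vertices. If for each i the graph G[W_i] contains a Hamiltonian path P_i of G[W_i] with endpoints a_{i-1} and a_i, then the union of the edge sets of P_0,...,P_{m-1} is the edge set of a Hamiltonian cycle of G. -/

import Mathlib

open SimpleGraph
open Fin.CommRing

private def glueWalks {V : Type} {G : SimpleGraph V} {m : ℕ} [NeZero m] {a : Fin m → V}
    (P : ∀ i : Fin m, G.Walk (a (i - 1)) (a i)) : ∀ k : ℕ, G.Walk (a (0 - 1)) (a (k : Fin m))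
  | 0 => (P 0).copy rfl (congrArg a (by norm_num))
  | (k+1) => (glueWalks P k).append
      ((P ((k+1 : ℕ) : Fin m)).copy
        (congrArg a (by push_cast; rw [add_sub_cancel_right])) rfl)

private lemma glueWalks_support_tail {V : Type} {G : SimpleGraph V} {m : ℕ} [NeZero m]
    {a : Fin m → V} (P : ∀ i : Fin m, G.Walk (a (i - 1)) (a i)) (k : ℕ) :
    (glueWalks P k).support.tail
      = (List.range (k+1)).flatMap (fun j : ℕ => (P (j : Fin m)).support.tail) := by
  induction k with
  | zero =>
      show ((P 0).copy rfl _).support.tail = _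
      rw [Walk.support_copy]
      simp only [List.range_succ, List.range_zero, List.nil_append, List.flatMap_cons,
        List.flatMap_nil, List.append_nil]
      rw [Nat.cast_zero]
  | succ k ih =>
      show ((glueWalks P k).append _).support.tail = _
      rw [Walk.tail_support_append, ih, Walk.support_copy]
      simp [List.range_succ, List.append_assoc]

private lemma glueWalks_edges {V : Type} {G : SimpleGraph V} {m : ℕ} [NeZero m]
    {a : Fin m → V} (P : ∀ i : Fin m, G.Walk (a (i - 1)) (a i)) (k : ℕ) :
    (glueWalks P k).edges = (List.range (k+1)).flatMap (fun j : ℕ => (P (j : Fin m)).edges) := by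
  induction k with
  | zero =>
      show ((P 0).copy rfl _).edges = _
      rw [Walk.edges_copy]
      simp only [List.range_succ, List.range_zero, List.nil_append, List.flatMap_cons,
        List.flatMap_nil, List.append_nil]
      rw [Nat.cast_zero]
  | succ k ih =>
      show ((glueWalks P k).append _).edges = _
      rw [Walk.edges_append, ih, Walk.edges_copy]
      simp [List.range_succ, List.append_assoc]

theorem glue_fixed_ham_paths_into_ham_cycle {V : Type} [Fintype V] [DecidableEq V]
    (G : SimpleGraph V) (m : ℕ) [NeZero m] (hm : 2 ≤ m) (W : Fin m → Finset V) (a : Fin m → V)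
    (hsize : ∀ i, 3 ≤ (W i).card)
    (hcover : ∀ v : V, ∃ i, v ∈ W i)
    (hconsec : ∀ i, W i ∩ W (i + 1) = {a i})
    (hdisj : ∀ i j : Fin m, i ≠ j → j ≠ i + 1 → i ≠ j + 1 → W i ∩ W j = ∅)
    (haW : ∀ i, a i ∈ W i) (haW' : ∀ i, a (i - 1) ∈ W i)
    (p : ∀ i, (G.induce (↑(W i) : Set V)).Walk ⟨a (i - 1), haW' i⟩ ⟨a i, haW i⟩)
    (hp : ∀ i, (p i).IsHamiltonian) :
    ∃ (b : V) (q : G.Walk b b), q.IsHamiltonianCycle ∧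
      q.edges.toFinset = Finset.univ.biUnion
        (fun i => ((p i).edges.map (Sym2.map (fun z : (↑(W i) : Set V) => (z : V)))).toFinset) := by
  classical
  -- the mapped paths in G
  let P : ∀ i : Fin m, G.Walk (a (i - 1)) (a i) := fun i =>
    ((p i).map (SimpleGraph.Embedding.induce (↑(W i) : Set V)).toHom).copy rfl rfl
  have hPsupp : ∀ i, (P i).support = (p i).support.map Subtype.val := by
    intro i
    show (((p i).map _).copy rfl rfl).support = _
    rw [Walk.support_copy, Walk.support_map]
    rfl
  have hPedges : ∀ i, (P i).edges
      = (p i).edges.map (Sym2.map (fun z : (↑(W i) : Set V) => (z : V))) := by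
    intro i
    show (((p i).map _).copy rfl rfl).edges = _
    rw [Walk.edges_copy, Walk.edges_map]
    rfl
  have hPnodup : ∀ i, (P i).support.Nodup := by
    intro i
    rw [hPsupp]
    exact ((hp i).isPath.support_nodup).map Subtype.val_injective
  have hPmem : ∀ i v, v ∈ (P i).support ↔ v ∈ W i := by
    intro i v
    rw [hPsupp, List.mem_map]
    constructor
    · rintro ⟨x, _, rfl⟩; exact x.2
    · intro hv; exact ⟨⟨v, hv⟩, (hp i).mem_support _, rfl⟩
  have htail : ∀ i v, v ∈ (P i).support.tail ↔ v ∈ W i ∧ v ≠ a (i - 1) := by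
    intro i v
    have hcons := (P i).support_eq_cons
    have hnd := hPnodup i
    rw [hcons, List.nodup_cons] at hnd
    constructor
    · intro hv
      refine ⟨(hPmem i v).1 (List.mem_of_mem_tail hv), ?_⟩
      rintro rfl; exact hnd.1 hv
    · rintro ⟨hv, hne⟩
      have hvs := (hPmem i v).2 hv
      rw [hcons, List.mem_cons] at hvs
      rcases hvs with h | h
      · exact absurd h hne
      · exact h
  have htailnd : ∀ i, (P i).support.tail.Nodup :=
    fun i => (hPnodup i).sublist (List.tail_sublist _)
  -- each path has length at least 2
  have hlen : ∀ i, 2 ≤ (p i).length := by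
    intro i
    have h3 := hsize i
    have hl := (hp i).length_eq
    simp only [Finset.coe_sort_coe, Fintype.card_coe] at hl
    omega
  -- the endpoints of each path are distinct
  have hane : ∀ i, a i ≠ a (i - 1) := by
    intro i h
    have hsub : (⟨a i, haW i⟩ : (↑(W i) : Set V)) = ⟨a (i - 1), haW' i⟩ := Subtype.ext h
    have hpath : ((p i).copy rfl hsub).IsPath := by
      rw [Walk.isPath_copy]; exact (hp i).isPath
    have hnil := SimpleGraph.Path.loop_eq ⟨(p i).copy rfl hsub, hpath⟩
    have hl : ((p i).copy rfl hsub).length = 0 := by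
      have h2 := congrArg (fun r : (G.induce (↑(W i) : Set V)).Path ⟨a (i - 1), haW' i⟩
        ⟨a (i - 1), haW' i⟩ => r.1.length) hnil
      simpa using h2
    rw [Walk.length_copy] at hl
    have := hlen i; omega
  -- intersections of distinct W's have at most one element
  have hcard : ∀ i j : Fin m, i ≠ j → (W i ∩ W j).card ≤ 1 := by
    intro i j hij
    by_cases h1 : j = i + 1
    · subst h1; rw [hconsec i]; simp
    · by_cases h2 : i = j + 1
      · rw [Finset.inter_comm, h2, hconsec j]; simp
      · rw [hdisj i j hij h1 h2]; simp
  -- disjointness of the tails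
  have hdisj2 : ∀ i i' : Fin m, i ≠ i' → ∀ v, v ∈ (P i).support.tail →
      v ∈ (P i').support.tail → False := by
    intro i i' hne v hv hv'
    obtain ⟨hvW, hvne⟩ := (htail i v).1 hv
    obtain ⟨hvW', hvne'⟩ := (htail i' v).1 hv'
    by_cases h1 : i' = i + 1
    · have hmem : v ∈ W i ∩ W (i + 1) := Finset.mem_inter.2 ⟨hvW, h1 ▸ hvW'⟩
      rw [hconsec i] at hmem
      have hv2 : v = a i := Finset.mem_singleton.1 hmem
      exact hvne' (by rw [hv2, h1, add_sub_cancel_right])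
    · by_cases h2 : i = i' + 1
      · have hmem : v ∈ W i' ∩ W (i' + 1) := Finset.mem_inter.2 ⟨hvW', h2 ▸ hvW⟩
        rw [hconsec i'] at hmem
        have hv2 : v = a i' := Finset.mem_singleton.1 hmem
        exact hvne (by rw [hv2, h2, add_sub_cancel_right])
      · have hempty := hdisj i i' hne h1 h2
        have : v ∈ (∅ : Finset V) := hempty ▸ Finset.mem_inter.2 ⟨hvW, hvW'⟩
        simp at this
  -- disjointness of the edges
  have hedisj : ∀ i i' : Fin m, i ≠ i' → ∀ e, e ∈ (P i).edges → e ∈ (P i').edges → False := by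
    intro i i' hne e
    induction e using Sym2.ind with
    | _ x y =>
      intro he he'
      have hadj : G.Adj x y := Walk.adj_of_mem_edges _ he
      have hx := (hPmem i x).1 ((P i).fst_mem_support_of_mem_edges he)
      have hy := (hPmem i y).1 ((P i).snd_mem_support_of_mem_edges he)
      have hx' := (hPmem i' x).1 ((P i').fst_mem_support_of_mem_edges he')
      have hy' := (hPmem i' y).1 ((P i').snd_mem_support_of_mem_edges he')
      have hxy : x = y :=
        Finset.card_le_one.1 (hcard i i' hne) x (Finset.mem_inter.2 ⟨hx, hx'⟩)
          y (Finset.mem_inter.2 ⟨hy, hy'⟩)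
      exact hadj.ne hxy
  have hPedgesnd : ∀ i, (P i).edges.Nodup := by
    intro i
    rw [hPedges]
    exact ((hp i).isPath.isTrail.edges_nodup).map
      (Sym2.map.injective Subtype.val_injective)
  -- the glued walk
  have h0 : a (0 - 1) = a (((m - 1 : ℕ) : Fin m)) := by
    congr 1
    have hc : ((m - 1 : ℕ) : Fin m) = (m : Fin m) - 1 := by
      rw [Nat.cast_sub (by omega : 1 ≤ m), Nat.cast_one]
    rw [hc, Fin.natCast_self]
  set b := a (((m - 1 : ℕ) : Fin m)) with hb
  refine ⟨b, (glueWalks P (m - 1)).copy h0 rfl, ?_, ?_⟩ <;>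
    set q : G.Walk b b := (glueWalks P (m - 1)).copy h0 rfl with hq
  all_goals {
    have hqtail : q.support.tail
        = (List.range m).flatMap (fun j : ℕ => (P (j : Fin m)).support.tail) := by
      have h := glueWalks_support_tail P (m - 1)
      rw [show m - 1 + 1 = m by omega] at h
      rw [hq, Walk.support_copy]
      exact h
    have hqedges : q.edges = (List.range m).flatMap (fun j : ℕ => (P (j : Fin m)).edges) := by
      have h := glueWalks_edges P (m - 1)
      rw [show m - 1 + 1 = m by omega] at h
      rw [hq, Walk.edges_copy]
      exact h
    have hcast_ne : ∀ j j' : ℕ, j < m → j' < m → j ≠ j' → (j : Fin m) ≠ (j' : Fin m) := by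
      intro j j' hj hj' hne h
      apply hne
      have h2 := congrArg Fin.val h
      rwa [Fin.val_cast_of_lt hj, Fin.val_cast_of_lt hj'] at h2
    have hmemtail : ∀ v, v ∈ q.support.tail := by
      intro v
      obtain ⟨i, hi⟩ := hcover v
      rw [hqtail, List.mem_flatMap]
      by_cases hv : v = a (i - 1)
      · refine ⟨(i - 1).val, by simp [List.mem_range, (i - 1).isLt], ?_⟩
        rw [Fin.cast_val_eq_self, htail]
        exact ⟨hv ▸ haW (i - 1), hv ▸ hane (i - 1)⟩
      · exact ⟨i.val, by simp [List.mem_range, i.isLt],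
          by rw [Fin.cast_val_eq_self, htail]; exact ⟨hi, hv⟩⟩
    have htailnodup : q.support.tail.Nodup := by
      rw [hqtail, List.nodup_flatMap]
      refine ⟨fun j _ => htailnd _, ?_⟩
      refine List.Pairwise.imp_of_mem ?_ (List.pairwise_lt_range (n := m))
      intro j j' hj hj' hlt v hv hv'
      exact hdisj2 _ _ (hcast_ne j j' (List.mem_range.1 hj) (List.mem_range.1 hj') hlt.ne) v hv hv'
    have hqtrail : q.IsTrail := by
      constructor
      rw [hqedges, List.nodup_flatMap]
      refine ⟨fun j _ => hPedgesnd _, ?_⟩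
      refine List.Pairwise.imp_of_mem ?_ (List.pairwise_lt_range (n := m))
      intro j j' hj hj' hlt e he he'
      exact hedisj _ _ (hcast_ne j j' (List.mem_range.1 hj) (List.mem_range.1 hj') hlt.ne) e he he'
    have hqnn : q ≠ Walk.nil := by
      intro h
      have h2 := hmemtail b
      rw [h] at h2
      simp [Walk.support_nil] at h2
    first
    | exact (Walk.isHamiltonianCycle_iff_isCycle_and_support_count_tail_eq_one).2
        ⟨⟨⟨hqtrail, hqnn⟩, htailnodup⟩,
         fun v => List.count_eq_one_of_mem htailnodup (hmemtail v)⟩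
    | {
        ext e
        simp only [List.mem_toFinset, Finset.mem_biUnion, Finset.mem_univ, true_and, hqedges,
          List.mem_flatMap, List.mem_range]
        constructor
        · rintro ⟨j, hj, he⟩
          exact ⟨(j : Fin m), by rw [← hPedges]; exact he⟩
        · rintro ⟨i, he⟩
          exact ⟨i.val, i.isLt, by rw [Fin.cast_val_eq_self, hPedges]; exact he⟩
      }
  }
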